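/- The semigroup of bounded semicharacters on F(M), for M a finite set, is isomorphic to (F(M), ∪, ∅) via ρ ↦ ⋂_{L ∈ ρ^{-1}(1)} (M ∖ L). -/

import Mathlib

/-- A bounded semicharacter on `(F(M), ∪, ∅)`: `ρ : F(M) → {0,1}` with `ρ(∅) = 1` and
`ρ(A ∪ B) = ρ(A)ρ(B)`. -/
def Semicharacter (ι : Type*) [DecidableEq ι] :=
  {ρ : Finset ι → Bool // ρ ∅ = true ∧ ∀ A B : Finset ι, ρ (A ∪ B) = (ρ A && ρ B)}

/-- The map `ρ ↦ ⋂_{L ∈ ρ⁻¹(1)} (M ∖ L)`. -/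
def semicharToSet {ι : Type*} [Fintype ι] [DecidableEq ι] (ρ : Semicharacter ι) :
    Finset ι :=
  Finset.univ.filter fun t => ∀ L : Finset ι, ρ.1 L = true → t ∉ L

lemma semichar_val_iff {ι : Type*} [DecidableEq ι] (ρ : Semicharacter ι) (A : Finset ι) :
    ρ.1 A = true ↔ ∀ t ∈ A, ρ.1 {t} = true := by
  induction A using Finset.induction_on with
  | empty => simp [ρ.2.1]
  | insert a A ha ih =>
    have : insert a A = {a} ∪ A := Finset.insert_eq a A
    rw [this, ρ.2.2]
    simp only [Bool.and_eq_true, ih]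
    constructor
    · rintro ⟨h1, h2⟩ t ht
      rcases Finset.mem_insert.mp ht with rfl | ht
      · exact h1
      · exact h2 t ht
    · intro h
      exact ⟨h a (Finset.mem_insert_self _ _), fun t ht => h t (Finset.mem_insert_of_mem ht)⟩

lemma mem_semicharToSet {ι : Type*} [Fintype ι] [DecidableEq ι] (ρ : Semicharacter ι)
    (t : ι) : t ∈ semicharToSet ρ ↔ ρ.1 {t} = false := by
  simp only [semicharToSet, Finset.mem_filter, Finset.mem_univ, true_and]
  constructor
  · intro h
    by_contra hne
    have : ρ.1 {t} = true := by
      cases h' : ρ.1 {t} <;> simp_all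
    exact h {t} this (Finset.mem_singleton_self t)
  · intro h L hL htL
    have := (semichar_val_iff ρ L).mp hL t htL
    rw [h] at this; exact Bool.false_ne_true this

theorem semicharacters_iso_powerset {ι : Type*} [Fintype ι] [DecidableEq ι] :
    Function.Bijective (semicharToSet (ι := ι)) ∧
      (∀ ρ σ π : Semicharacter ι, (∀ A : Finset ι, π.1 A = (ρ.1 A && σ.1 A)) →
        semicharToSet π = semicharToSet ρ ∪ semicharToSet σ) ∧
      (∀ e : Semicharacter ι, (∀ A : Finset ι, e.1 A = true) → semicharToSet e = ∅) := by
  refine ⟨⟨?_, ?_⟩, ?_, ?_⟩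
  · intro ρ σ h
    apply Subtype.ext
    funext A
    have key : ∀ t : ι, ρ.1 {t} = σ.1 {t} := by
      intro t
      have := Finset.ext_iff.mp h t
      rw [mem_semicharToSet, mem_semicharToSet] at this
      cases h1 : ρ.1 {t} <;> cases h2 : σ.1 {t} <;> simp_all
    cases hA : σ.1 A with
    | true =>
      rw [semichar_val_iff]
      intro t ht
      rw [key t]
      exact (semichar_val_iff σ A).mp hA t ht
    | false =>
      by_contra hc
      have : ρ.1 A = true := by cases h' : ρ.1 A <;> simp_all
      have := (semichar_val_iff σ A).mpr (fun t ht => (key t) ▸ (semichar_val_iff ρ A).mp this t ht)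
      simp_all
  · intro S
    refine ⟨⟨fun A => decide (∀ t ∈ A, t ∉ S), by simp, fun A B => ?_⟩, ?_⟩
    · simp only [Finset.mem_union, decide_eq_true_eq]
      rw [Bool.eq_iff_iff]
      simp only [Bool.and_eq_true, decide_eq_true_eq]
      constructor
      · intro h
        exact ⟨fun t ht => h t (Or.inl ht), fun t ht => h t (Or.inr ht)⟩
      · rintro ⟨h1, h2⟩ t (ht | ht)
        · exact h1 t ht
        · exact h2 t ht
    · ext t
      refine (mem_semicharToSet _ t).trans ?_
      simp
  · intro ρ σ π h
    ext t
    rw [Finset.mem_union, mem_semicharToSet, mem_semicharToSet, mem_semicharToSet, h]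
    cases h1 : ρ.1 {t} <;> cases h2 : σ.1 {t} <;> simp
  · intro e he
    ext t
    rw [mem_semicharToSet, he]
    simp
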